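/- Let ψ be an n-qubit pure state and let k ≥ 1 be a real number. If the stabilizer fidelity of ψ is at least 1/k, then η(ψ) := 2ⁿ Σ_{x∈𝔽₂^{2n}} q_ψ(x) p_ψ(x) ≥ 1/k⁶. -/

import Mathlib

open scoped BigOperators
open Finset

noncomputable section

/-- Length-`n` bit strings, i.e. `𝔽₂ⁿ`. -/
abbrev BV (n : ℕ) := Fin n → ZMod 2

/-- Integer-valued inner product: number of coordinates where both strings are 1. -/
def bdot {n : ℕ} (p q : BV n) : ℕ :=
  (Finset.univ.filter (fun i => p i = 1 ∧ q i = 1)).card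

/-- The Weyl operator `W_x` for `x = (p, q) ∈ 𝔽₂^{2n}`:
`W_x |b⟩ = i^{p·q} (−1)^{q·b} |b ⊕ p⟩`. -/
def Weyl {n : ℕ} (x : BV n × BV n) : Matrix (BV n) (BV n) ℂ :=
  Matrix.of fun r c => if r = c + x.1 then Complex.I ^ bdot x.1 x.2 * (-1 : ℂ) ^ bdot x.2 c else 0

/-- `⟨ψ|W_x|ψ⟩`. -/
def weylExp {n : ℕ} (ψ : BV n → ℂ) (x : BV n × BV n) : ℂ :=
  ∑ r : BV n, (starRingEnd ℂ) (ψ r) * ((Weyl x).mulVec ψ r)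

/-- `ψ` is an `n`-qubit pure state, i.e. a unit vector in `ℂ^{2ⁿ}`. -/
def IsState {n : ℕ} (ψ : BV n → ℂ) : Prop :=
  ∑ b : BV n, ‖ψ b‖ ^ 2 = 1

/-- The characteristic distribution `p_ψ(x) = 2^{−n} |⟨ψ|W_x|ψ⟩|²`. -/
def charDist {n : ℕ} (ψ : BV n → ℂ) (x : BV n × BV n) : ℝ :=
  (2 ^ n : ℝ)⁻¹ * ‖weylExp ψ x‖ ^ 2

/-- The Weyl distribution `q_ψ(x) = Σ_y p_ψ(y) p_ψ(x ⊕ y)`. -/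
def weylDist {n : ℕ} (ψ : BV n → ℂ) (x : BV n × BV n) : ℝ :=
  ∑ y : BV n × BV n, charDist ψ y * charDist ψ (x + y)

/-- Fourier coefficient `f̂(s) = 4^{−n} Σ_x f(x) (−1)^{x·s}` for `f : 𝔽₂^{2n} → ℝ`. -/
def booleanFourier {n : ℕ} (f : BV n × BV n → ℝ) (s : BV n × BV n) : ℝ :=
  (4 ^ n : ℝ)⁻¹ * ∑ x : BV n × BV n, f x * (-1 : ℝ) ^ (bdot x.1 s.1 + bdot x.2 s.2)

/-- The Hadamard gate on qubit `j`. -/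
def Hgate {n : ℕ} (j : Fin n) : Matrix (BV n) (BV n) ℂ :=
  Matrix.of fun r c =>
    if ∀ i, i ≠ j → r i = c i then
      (((Real.sqrt 2 : ℝ) : ℂ))⁻¹ * (-1 : ℂ) ^ ((r j).val * (c j).val)
    else 0

/-- The phase gate `S = diag(1, i)` on qubit `j`. -/
def Sgate {n : ℕ} (j : Fin n) : Matrix (BV n) (BV n) ℂ :=
  Matrix.of fun r c => if r = c then Complex.I ^ (r j).val else 0

/-- The CNOT gate with control qubit `j` and target qubit `k`. -/
def CNOTgate {n : ℕ} (j k : Fin n) : Matrix (BV n) (BV n) ℂ :=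
  Matrix.of fun r c => if r = Function.update c k (c k + c j) then 1 else 0

/-- The generators of the `n`-qubit Clifford group. -/
def cliffordGens (n : ℕ) : Set (Matrix (BV n) (BV n) ℂ) :=
  {M | (∃ j, M = Hgate j) ∨ (∃ j, M = Sgate j) ∨ (∃ j k, j ≠ k ∧ M = CNOTgate j k)}

/-- The `n`-qubit Clifford group `𝒞ₙ`: all finite products of the generators.
(Each generator has finite order, so this coincides with the generated group.) -/
def CliffordGroup (n : ℕ) : Submonoid (Matrix (BV n) (BV n) ℂ) :=
  Submonoid.closure (cliffordGens n)

/-- The all-zeros basis state `|0ⁿ⟩`. -/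
def e0 {n : ℕ} : BV n → ℂ := fun b => if b = 0 then 1 else 0

/-- The set of `n`-qubit stabilizer states `𝒮ₙ = {C|0ⁿ⟩ : C ∈ 𝒞ₙ}`. -/
def stabStates (n : ℕ) : Set (BV n → ℂ) :=
  {φ | ∃ C ∈ CliffordGroup n, φ = C.mulVec e0}

/-- The inner product `⟨φ|ψ⟩`. -/
def innerC {n : ℕ} (φ ψ : BV n → ℂ) : ℂ := ∑ b : BV n, (starRingEnd ℂ) (φ b) * ψ b

/-- The stabilizer fidelity `F_𝒮(ψ) = max_{φ ∈ 𝒮ₙ} |⟨φ|ψ⟩|²`. -/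
def stabFidelity {n : ℕ} (ψ : BV n → ℂ) : ℝ :=
  sSup {r | ∃ φ ∈ stabStates n, r = ‖innerC φ ψ‖ ^ 2}

/-- The stabilizer extent `ξ(ψ)`: the minimum of `(Σᵢ |cᵢ|)²` over all finite
decompositions `ψ = Σᵢ cᵢ φᵢ` with stabilizer states `φᵢ`. -/
def stabExtent {n : ℕ} (ψ : BV n → ℂ) : ℝ :=
  sInf {r | ∃ (m : ℕ) (c : Fin m → ℂ) (φ : Fin m → (BV n → ℂ)),
    (∀ i, φ i ∈ stabStates n) ∧ ψ = ∑ i, c i • φ i ∧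
    r = (∑ i, ‖c i‖) ^ 2}

/-- The T-gate `T = diag(1, e^{iπ/4})` on qubit `j`. -/
def Tgate {n : ℕ} (j : Fin n) : Matrix (BV n) (BV n) ℂ :=
  Matrix.of fun r c => if r = c then Complex.exp (Complex.I * Real.pi / 4) ^ (r j).val else 0

/-- The `m`-fold tensor power `|T⟩^{⊗m}` of `|T⟩ = (|0⟩ + e^{iπ/4}|1⟩)/√2`. -/
def TstateM (m : ℕ) : BV m → ℂ :=
  fun b => ∏ i : Fin m, ((((Real.sqrt 2 : ℝ) : ℂ))⁻¹ * Complex.exp (Complex.I * Real.pi / 4) ^ (b i).val)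

end

noncomputable section EtaAux
open Matrix
variable {n : ℕ}

section B1
variable {n : ℕ}

lemma zmod2_cases (v : ZMod 2) : v = 0 ∨ v = 1 := by revert v; decide

lemma bv_add_self (a : BV n) : a + a = 0 := by
  funext i; have : ∀ v : ZMod 2, v + v = 0 := by decide
  exact this (a i)

lemma bv_add_cancel (a b : BV n) : a + b + b = a := by
  rw [add_assoc, bv_add_self, add_zero]

lemma bv_eq_add_iff {a b c : BV n} : a = b + c ↔ b = a + c :=
  ⟨fun h => by rw [h, bv_add_cancel], fun h => by rw [h, bv_add_cancel]⟩

lemma bv_add_eq_zero_iff {a b : BV n} : a + b = 0 ↔ a = b := by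
  constructor
  · intro h
    have := congrArg (fun z => z + b) h
    simpa [bv_add_cancel] using this
  · rintro rfl; exact bv_add_self a

lemma bdot_comm (p q : BV n) : bdot p q = bdot q p := by
  unfold bdot; congr 1; ext i; simp [and_comm]

lemma pow_bdot_eq_prod (z : ℂ) (a b : BV n) :
    z ^ bdot a b = ∏ i, (if a i = 1 ∧ b i = 1 then z else 1) := by
  rw [bdot, ← Finset.prod_const, Finset.prod_filter]

lemma neg_pow_bdot_add_right (a b c : BV n) :
    (-1 : ℂ) ^ bdot a (b + c) = (-1) ^ bdot a b * (-1) ^ bdot a c := by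
  rw [pow_bdot_eq_prod, pow_bdot_eq_prod, pow_bdot_eq_prod, ← Finset.prod_mul_distrib]
  refine Finset.prod_congr rfl fun i _ => ?_
  have hb : b i + c i = (b + c) i := rfl
  rcases zmod2_cases (a i) with h1 | h1 <;>
    rcases zmod2_cases (b i) with h2 | h2 <;>
    rcases zmod2_cases (c i) with h3 | h3 <;>
    simp [← hb, h1, h2, h3]

lemma neg_pow_bdot_add_left (a b c : BV n) :
    (-1 : ℂ) ^ bdot (a + b) c = (-1) ^ bdot a c * (-1) ^ bdot b c := by
  rw [bdot_comm, neg_pow_bdot_add_right, bdot_comm c a, bdot_comm c b]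

lemma neg_pow_bdot_mul_self (a b : BV n) :
    (-1 : ℂ) ^ bdot a b * (-1) ^ bdot a b = 1 := by
  rw [← mul_pow]; norm_num

lemma sum_neg_pow_bdot (c : BV n) :
    ∑ q : BV n, (-1 : ℂ) ^ bdot q c = if c = 0 then (2 : ℂ) ^ n else 0 := by
  split_ifs with h
  · subst h
    have : ∀ q : BV n, bdot q (0 : BV n) = 0 := by
      intro q; unfold bdot
      convert Finset.card_empty
      ext i; simp
    simp only [this, pow_zero, Finset.sum_const, nsmul_eq_mul, mul_one]
    norm_num [Fintype.card_fun]
  · obtain ⟨j, hj⟩ := Function.ne_iff.mp h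
    have hj1 : c j = 1 := by rcases zmod2_cases (c j) with h' | h' <;> simp_all
    set d : BV n := fun i => if i = j then 1 else 0 with hd
    have hdc : bdot d c = 1 := by
      unfold bdot
      rw [show (Finset.univ.filter fun i => d i = 1 ∧ c i = 1) = {j} from ?_, Finset.card_singleton]
      ext i; simp only [Finset.mem_filter, Finset.mem_univ, true_and, Finset.mem_singleton, hd]
      constructor
      · rintro ⟨h1, _⟩; by_contra hij; simp [hij] at h1
      · rintro rfl; simp [hj1]
    have key : ∑ q : BV n, (-1 : ℂ) ^ bdot q c = ∑ q : BV n, (-1 : ℂ) ^ bdot (q + d) c := by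
      exact (Fintype.sum_equiv (Equiv.addRight d) _ _ fun q => rfl).symm
    have key2 : ∀ q : BV n, (-1 : ℂ) ^ bdot (q + d) c = -((-1 : ℂ) ^ bdot q c) := by
      intro q; rw [neg_pow_bdot_add_left, hdc]; ring
    simp only [key2] at key
    rw [Finset.sum_neg_distrib] at key
    linear_combination key / 2
end B1

section B2
variable {n : ℕ}

/-- The phase-free bilinear form whose absolute value agrees with `weylExp`. -/
def Af (ψ : BV n → ℂ) (x : BV n × BV n) : ℂ :=
  ∑ r : BV n, (starRingEnd ℂ) (ψ r) * (-1 : ℂ) ^ bdot x.2 r * ψ (r + x.1)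

lemma weyl_mulVec (x : BV n × BV n) (ψ : BV n → ℂ) (r : BV n) :
    (Weyl x).mulVec ψ r
      = Complex.I ^ bdot x.1 x.2 * (-1 : ℂ) ^ bdot x.2 (r + x.1) * ψ (r + x.1) := by
  unfold Weyl
  simp only [Matrix.mulVec, dotProduct, Matrix.of_apply]
  rw [Finset.sum_eq_single (r + x.1)]
  · rw [if_pos (bv_add_cancel r x.1).symm]
  · intro c _ hc
    rw [if_neg, zero_mul]
    intro h; exact hc (bv_eq_add_iff.mp h)
  · intro h; exact absurd (Finset.mem_univ _) h

lemma weylExp_eq (ψ : BV n → ℂ) (x : BV n × BV n) :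
    weylExp ψ x = (Complex.I ^ bdot x.1 x.2 * (-1 : ℂ) ^ bdot x.2 x.1) * Af ψ x := by
  unfold weylExp Af
  rw [Finset.mul_sum]
  refine Finset.sum_congr rfl fun r _ => ?_
  rw [weyl_mulVec, neg_pow_bdot_add_right]
  ring

lemma conj_weylExp_mul (φ ψ : BV n → ℂ) (x : BV n × BV n) :
    (starRingEnd ℂ) (weylExp φ x) * weylExp ψ x
      = (starRingEnd ℂ) (Af φ x) * Af ψ x := by
  rw [weylExp_eq, weylExp_eq, _root_.map_mul]
  have h1 : (starRingEnd ℂ) (Complex.I ^ bdot x.1 x.2 * (-1 : ℂ) ^ bdot x.2 x.1) *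
      (Complex.I ^ bdot x.1 x.2 * (-1 : ℂ) ^ bdot x.2 x.1) = 1 := by
    rw [_root_.map_mul, _root_.map_pow, _root_.map_pow, Complex.conj_I, _root_.map_neg, _root_.map_one]
    rw [show ((-Complex.I) ^ bdot x.1 x.2 * (-1 : ℂ) ^ bdot x.2 x.1) *
      (Complex.I ^ bdot x.1 x.2 * (-1 : ℂ) ^ bdot x.2 x.1)
      = ((-Complex.I) * Complex.I) ^ bdot x.1 x.2 * ((-1 : ℂ) * (-1)) ^ bdot x.2 x.1 by
        rw [mul_pow, mul_pow]; ring]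
    simp [Complex.I_mul_I]
  calc (starRingEnd ℂ) (Complex.I ^ bdot x.1 x.2 * (-1 : ℂ) ^ bdot x.2 x.1) *
        (starRingEnd ℂ) (Af φ x) * ((Complex.I ^ bdot x.1 x.2 * (-1 : ℂ) ^ bdot x.2 x.1) * Af ψ x)
      = ((starRingEnd ℂ) (Complex.I ^ bdot x.1 x.2 * (-1 : ℂ) ^ bdot x.2 x.1) *
        (Complex.I ^ bdot x.1 x.2 * (-1 : ℂ) ^ bdot x.2 x.1)) *
        ((starRingEnd ℂ) (Af φ x) * Af ψ x) := by ring
    _ = _ := by rw [h1, one_mul]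

lemma conj_Af (ψ : BV n → ℂ) (x : BV n × BV n) :
    (starRingEnd ℂ) (Af ψ x)
      = ∑ c : BV n, ψ c * (-1 : ℂ) ^ bdot x.2 c * (starRingEnd ℂ) (ψ (c + x.1)) := by
  unfold Af
  rw [_root_.map_sum]
  refine Finset.sum_congr rfl fun c _ => ?_
  rw [_root_.map_mul, _root_.map_mul, Complex.conj_conj]
  congr 1
  · congr 1
    rw [_root_.map_pow, _root_.map_neg, _root_.map_one]
end B2

section B3
variable {n : ℕ}

lemma bdot_zero_right (a : BV n) : bdot a 0 = 0 := by
  unfold bdot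
  convert Finset.card_empty
  ext i; simp

lemma sum_char (a : BV n) (F : BV n → BV n → ℂ) :
    ∑ x2 : BV n, ∑ r : BV n, ∑ c : BV n,
        F r c * ((-1 : ℂ) ^ bdot x2 r * ((-1 : ℂ) ^ bdot x2 c * (-1 : ℂ) ^ bdot x2 a))
      = (2 : ℂ) ^ n * ∑ r : BV n, F r (r + a) := by
  rw [Finset.sum_comm, Finset.mul_sum]
  refine Finset.sum_congr rfl fun r _ => ?_
  rw [Finset.sum_comm]
  have h1 : ∀ c : BV n,
      ∑ x2 : BV n, F r c * ((-1 : ℂ) ^ bdot x2 r * ((-1 : ℂ) ^ bdot x2 c * (-1 : ℂ) ^ bdot x2 a))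
        = if c = r + a then F r c * (2 : ℂ) ^ n else 0 := by
    intro c
    have h2 : ∀ x2 : BV n, (-1 : ℂ) ^ bdot x2 r * ((-1 : ℂ) ^ bdot x2 c * (-1 : ℂ) ^ bdot x2 a)
        = (-1 : ℂ) ^ bdot x2 (r + (c + a)) := by
      intro x2; rw [neg_pow_bdot_add_right, neg_pow_bdot_add_right]
    simp only [h2]
    rw [← Finset.mul_sum, sum_neg_pow_bdot]
    have h3 : (r + (c + a) = 0) ↔ (c = r + a) := by
      rw [bv_add_eq_zero_iff]
      exact ⟨fun h => bv_eq_add_iff.mp h, fun h => bv_eq_add_iff.mp h⟩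
    rw [if_congr h3 rfl rfl]
    split_ifs <;> simp
  simp only [h1]
  rw [Finset.sum_ite_eq' Finset.univ (r + a) (fun c => F r c * (2:ℂ) ^ n)]
  simp [mul_comm]

lemma sum_conj_weylExp_mul (φ ψ : BV n → ℂ) :
    ∑ x : BV n × BV n, (starRingEnd ℂ) (weylExp φ x) * weylExp ψ x
      = (2 : ℂ) ^ n * ((starRingEnd ℂ) (innerC φ ψ) * innerC φ ψ) := by
  simp only [conj_weylExp_mul]
  rw [Fintype.sum_prod_type]
  set F : BV n → BV n → BV n → ℂ := fun x1 r c =>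
    ((starRingEnd ℂ) (ψ r) * ψ (r + x1)) * (φ c * (starRingEnd ℂ) (φ (c + x1))) with hF
  have expand : ∀ x1 x2 : BV n,
      (starRingEnd ℂ) (Af φ (x1, x2)) * Af ψ (x1, x2)
        = ∑ r : BV n, ∑ c : BV n,
            F x1 r c * ((-1 : ℂ) ^ bdot x2 r * ((-1 : ℂ) ^ bdot x2 c * (-1 : ℂ) ^ bdot x2 (0 : BV n))) := by
    intro x1 x2
    rw [conj_Af, mul_comm]
    show Af ψ (x1, x2) * _ = _
    unfold Af
    rw [Finset.sum_mul_sum]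
    refine Finset.sum_congr rfl fun r _ => Finset.sum_congr rfl fun c _ => ?_
    rw [bdot_zero_right, pow_zero, mul_one, hF]
    simp only []
    ring
  calc ∑ x1 : BV n, ∑ x2 : BV n, (starRingEnd ℂ) (Af φ (x1, x2)) * Af ψ (x1, x2)
      = ∑ x1 : BV n, ∑ x2 : BV n, ∑ r : BV n, ∑ c : BV n,
          F x1 r c * ((-1 : ℂ) ^ bdot x2 r * ((-1 : ℂ) ^ bdot x2 c * (-1 : ℂ) ^ bdot x2 (0:BV n))) := by
        exact Finset.sum_congr rfl fun x1 _ => Finset.sum_congr rfl fun x2 _ => expand x1 x2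
    _ = ∑ x1 : BV n, (2:ℂ) ^ n * ∑ r : BV n, F x1 r (r + 0) := by
        exact Finset.sum_congr rfl fun x1 _ => sum_char 0 (F x1)
    _ = (2:ℂ) ^ n * ∑ r : BV n, ∑ x1 : BV n, F x1 r r := by
        rw [← Finset.mul_sum, Finset.sum_comm]
        simp only [add_zero]
    _ = (2:ℂ) ^ n * ((starRingEnd ℂ) (innerC φ ψ) * innerC φ ψ) := by
        congr 1
        calc ∑ r : BV n, ∑ x1 : BV n, F x1 r r
            = ∑ r : BV n, ∑ s : BV n,
                ((starRingEnd ℂ) (ψ r) * φ r) * (ψ s * (starRingEnd ℂ) (φ s)) := by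
              refine Finset.sum_congr rfl fun r _ => ?_
              refine Fintype.sum_equiv (Equiv.addLeft r) _ _ fun x1 => ?_
              simp only [hF, Equiv.coe_addLeft]
              ring
          _ = (∑ r : BV n, (starRingEnd ℂ) (ψ r) * φ r)
                * (∑ s : BV n, ψ s * (starRingEnd ℂ) (φ s)) := by
              rw [Finset.sum_mul_sum]
          _ = (starRingEnd ℂ) (innerC φ ψ) * innerC φ ψ := by
              unfold innerC
              rw [_root_.map_sum]
              congr 1
              · exact Finset.sum_congr rfl fun r _ => by rw [_root_.map_mul, Complex.conj_conj]; ring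
              · exact Finset.sum_congr rfl fun s _ => by ring

end B3

section B4
variable {n : ℕ}

lemma hsign_aux (w2 r y1 : BV n) :
    (-1:ℂ) ^ bdot w2 r * (-1:ℂ) ^ bdot w2 (r + y1) = (-1:ℂ) ^ bdot y1 w2 := by
  rw [neg_pow_bdot_add_right, ← mul_assoc, neg_pow_bdot_mul_self, one_mul, bdot_comm]

/-- Self-duality of the characteristic function under the symplectic Fourier transform. -/
lemma sum_weylExp_sign (ψ : BV n → ℂ) (w : BV n × BV n) :
    ∑ y : BV n × BV n, ((starRingEnd ℂ) (weylExp ψ y) * weylExp ψ y)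
        * ((-1:ℂ) ^ bdot y.1 w.2 * (-1:ℂ) ^ bdot y.2 w.1)
      = (2:ℂ) ^ n * ((starRingEnd ℂ) (weylExp ψ w) * weylExp ψ w) := by
  simp only [conj_weylExp_mul]
  rw [Fintype.sum_prod_type]
  set G : BV n → BV n → BV n → ℂ := fun y1 r c =>
    ((starRingEnd ℂ) (ψ r) * ψ (r + y1)) * (ψ c * (starRingEnd ℂ) (ψ (c + y1)))
      * (-1:ℂ) ^ bdot y1 w.2 with hG
  have expand : ∀ y1 y2 : BV n,
      ((starRingEnd ℂ) (Af ψ (y1, y2)) * Af ψ (y1, y2))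
          * ((-1:ℂ) ^ bdot (y1,y2).1 w.2 * (-1:ℂ) ^ bdot (y1,y2).2 w.1)
        = ∑ r : BV n, ∑ c : BV n,
            G y1 r c * ((-1:ℂ) ^ bdot y2 r * ((-1:ℂ) ^ bdot y2 c * (-1:ℂ) ^ bdot y2 w.1)) := by
    intro y1 y2
    rw [mul_comm ((starRingEnd ℂ) (Af ψ (y1, y2))) (Af ψ (y1, y2)), conj_Af]
    show (Af ψ (y1, y2) * _) * _ = _
    unfold Af
    rw [Finset.sum_mul_sum, Finset.sum_mul]
    refine Finset.sum_congr rfl fun r _ => ?_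
    rw [Finset.sum_mul]
    refine Finset.sum_congr rfl fun c _ => ?_
    simp only [hG]
    ring
  calc ∑ y1 : BV n, ∑ y2 : BV n,
        ((starRingEnd ℂ) (Af ψ (y1, y2)) * Af ψ (y1, y2))
          * ((-1:ℂ) ^ bdot (y1, y2).1 w.2 * (-1:ℂ) ^ bdot (y1, y2).2 w.1)
      = ∑ y1 : BV n, ∑ y2 : BV n, ∑ r : BV n, ∑ c : BV n,
          G y1 r c * ((-1:ℂ) ^ bdot y2 r * ((-1:ℂ) ^ bdot y2 c * (-1:ℂ) ^ bdot y2 w.1)) :=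
        Finset.sum_congr rfl fun y1 _ => Finset.sum_congr rfl fun y2 _ => expand y1 y2
    _ = ∑ y1 : BV n, (2:ℂ) ^ n * ∑ r : BV n, G y1 r (r + w.1) :=
        Finset.sum_congr rfl fun y1 _ => sum_char w.1 (G y1)
    _ = (2:ℂ) ^ n * ((starRingEnd ℂ) (Af ψ w) * Af ψ w) := by
        rw [← Finset.mul_sum]
        congr 1
        rw [Finset.sum_comm,
          mul_comm ((starRingEnd ℂ) (Af ψ w)) (Af ψ w), conj_Af]
        show _ = Af ψ w * _
        unfold Af
        rw [Finset.sum_mul_sum]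
        refine Finset.sum_congr rfl fun r _ => ?_
        refine Fintype.sum_equiv (Equiv.addLeft r) _ _ fun y1 => ?_
        simp only [hG, Equiv.coe_addLeft]
        rw [add_right_comm r y1 w.1]
        rw [← hsign_aux w.2 r y1]
        ring
end B4

section B5
variable {n : ℕ}

lemma conj_mul_self (z : ℂ) : (starRingEnd ℂ) z * z = ((Complex.normSq z : ℝ) : ℂ) := by
  rw [mul_comm]; exact Complex.mul_conj z

/-- `normSq` of the Weyl expectation. -/
def Nw (ψ : BV n → ℂ) (x : BV n × BV n) : ℝ := Complex.normSq (weylExp ψ x)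

lemma Nw_nonneg (ψ : BV n → ℂ) (x : BV n × BV n) : 0 ≤ Nw ψ x := Complex.normSq_nonneg _

lemma charDist_eq (ψ : BV n → ℂ) (x : BV n × BV n) :
    charDist ψ x = ((2:ℝ) ^ n)⁻¹ * Nw ψ x := by
  unfold charDist Nw
  rw [Complex.sq_norm]

lemma pow_bdot_eq_prodR (z : ℝ) (a b : BV n) :
    z ^ bdot a b = ∏ i, (if a i = 1 ∧ b i = 1 then z else 1) := by
  rw [bdot, ← Finset.prod_const, Finset.prod_filter]

lemma neg_pow_bdot_add_rightR (a b c : BV n) :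
    (-1 : ℝ) ^ bdot a (b + c) = (-1) ^ bdot a b * (-1) ^ bdot a c := by
  rw [pow_bdot_eq_prodR, pow_bdot_eq_prodR, pow_bdot_eq_prodR, ← Finset.prod_mul_distrib]
  refine Finset.prod_congr rfl fun i _ => ?_
  have hb : b i + c i = (b + c) i := rfl
  rcases zmod2_cases (a i) with h1 | h1 <;>
    rcases zmod2_cases (b i) with h2 | h2 <;>
    rcases zmod2_cases (c i) with h3 | h3 <;>
    simp [← hb, h1, h2, h3]

lemma neg_pow_bdot_mul_selfR (a b : BV n) :
    (-1 : ℝ) ^ bdot a b * (-1) ^ bdot a b = 1 := by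
  rw [← mul_pow]; norm_num

/-- The symplectic-complement sign character on `𝔽₂^{2n}`. -/
def sgR (a b : (Fin n → ZMod 2) × (Fin n → ZMod 2)) : ℝ :=
  (-1) ^ bdot a.1 b.2 * (-1) ^ bdot a.2 b.1

lemma sgR_symm (a b : BV n × BV n) : sgR a b = sgR b a := by
  unfold sgR; rw [bdot_comm, mul_comm, bdot_comm]

lemma sgR_add_right (a b c : BV n × BV n) : sgR a (b + c) = sgR a b * sgR a c := by
  unfold sgR
  show (-1:ℝ) ^ bdot a.1 (b.2 + c.2) * (-1) ^ bdot a.2 (b.1 + c.1) = _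
  rw [neg_pow_bdot_add_rightR, neg_pow_bdot_add_rightR]
  ring

lemma dualityR (ψ : BV n → ℂ) (w : BV n × BV n) :
    ∑ y : BV n × BV n, Nw ψ y * sgR y w = (2:ℝ) ^ n * Nw ψ w := by
  have h := sum_weylExp_sign ψ w
  have hterm : ∀ y : BV n × BV n,
      ((starRingEnd ℂ) (weylExp ψ y) * weylExp ψ y)
        * ((-1:ℂ) ^ bdot y.1 w.2 * (-1:ℂ) ^ bdot y.2 w.1)
      = ((Nw ψ y * sgR y w : ℝ) : ℂ) := by
    intro y
    rw [conj_mul_self]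
    unfold Nw sgR
    push_cast
    ring
  rw [Finset.sum_congr rfl (fun y _ => hterm y), conj_mul_self] at h
  rw [← Complex.ofReal_sum] at h
  have : ((2:ℂ) ^ n * ((Complex.normSq (weylExp ψ w) : ℝ) : ℂ))
      = (((2:ℝ) ^ n * Nw ψ w : ℝ) : ℂ) := by
    unfold Nw; push_cast; ring
  rw [this] at h
  exact_mod_cast h

lemma stateSumR (φ : BV n → ℂ) (hφ : IsState φ) :
    ∑ x : BV n × BV n, Nw φ x = (2:ℝ) ^ n := by
  have h := sum_conj_weylExp_mul φ φ
  have hI : innerC φ φ = 1 := by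
    unfold innerC
    have : ∀ b : BV n, (starRingEnd ℂ) (φ b) * φ b = ((Complex.normSq (φ b) : ℝ) : ℂ) :=
      fun b => conj_mul_self _
    rw [Finset.sum_congr rfl fun b _ => this b, ← Complex.ofReal_sum]
    unfold IsState at hφ
    have h2 : ∑ b : BV n, Complex.normSq (φ b) = 1 := by
      rw [← hφ]
      exact Finset.sum_congr rfl fun b _ => (Complex.sq_norm _).symm
    rw [h2, Complex.ofReal_one]
  rw [hI] at h
  simp only [_root_.map_one, mul_one] at h
  have hterm : ∀ x : BV n × BV n,
      (starRingEnd ℂ) (weylExp φ x) * weylExp φ x = ((Nw φ x : ℝ) : ℂ) :=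
    fun x => conj_mul_self _
  rw [Finset.sum_congr rfl (fun x _ => hterm x), ← Complex.ofReal_sum] at h
  exact_mod_cast h

lemma crossR (φ ψ : BV n → ℂ) :
    ‖(∑ x : BV n × BV n, (starRingEnd ℂ) (weylExp φ x) * weylExp ψ x)‖
      = (2:ℝ) ^ n * Complex.normSq (innerC φ ψ) := by
  rw [sum_conj_weylExp_mul, conj_mul_self, norm_mul, Complex.norm_real, Real.norm_eq_abs,
    abs_of_nonneg (Complex.normSq_nonneg _)]
  congr 1
  rw [show ((2:ℂ)^n) = (((2:ℝ)^n : ℝ) : ℂ) by push_cast; ring, Complex.norm_real, Real.norm_eq_abs]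
  exact abs_of_nonneg (by positivity)

/-- The convolution identity: `q`-side sum in terms of squares. -/
lemma convR (ψ : BV n → ℂ) (x : BV n × BV n) :
    ∑ y : BV n × BV n, Nw ψ y * Nw ψ (x + y)
      = ∑ z : BV n × BV n, (Nw ψ z) ^ 2 * sgR z x := by
  have hN : ∀ w : BV n × BV n,
      Nw ψ w = ((2:ℝ)^n)⁻¹ * ∑ y : BV n × BV n, Nw ψ y * sgR y w := by
    intro w
    rw [dualityR, ← mul_assoc, inv_mul_cancel₀ (by positivity : ((2:ℝ)^n) ≠ 0), one_mul]
  calc ∑ y : BV n × BV n, Nw ψ y * Nw ψ (x + y)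
      = ∑ y : BV n × BV n, ∑ z : BV n × BV n,
          ((2:ℝ)^n)⁻¹ * ((Nw ψ z * sgR z x) * (Nw ψ y * sgR y z)) := by
        refine Finset.sum_congr rfl fun y _ => ?_
        rw [hN (x + y), Finset.mul_sum, Finset.mul_sum]
        refine Finset.sum_congr rfl fun z _ => ?_
        rw [sgR_add_right z x y, sgR_symm y z]
        ring
    _ = ∑ z : BV n × BV n,
          ((2:ℝ)^n)⁻¹ * ((Nw ψ z * sgR z x) * ∑ y : BV n × BV n, Nw ψ y * sgR y z) := by
        rw [Finset.sum_comm]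
        refine Finset.sum_congr rfl fun z _ => ?_
        rw [← Finset.mul_sum, ← Finset.mul_sum]
    _ = ∑ z : BV n × BV n, (Nw ψ z) ^ 2 * sgR z x := by
        refine Finset.sum_congr rfl fun z _ => ?_
        rw [dualityR ψ z, ← mul_assoc]
        have h2 : ((2:ℝ)^n)⁻¹ * (Nw ψ z * sgR z x) * ((2:ℝ)^n * Nw ψ z)
            = (((2:ℝ)^n)⁻¹ * (2:ℝ)^n) * ((Nw ψ z * sgR z x) * Nw ψ z) := by ring
        rw [h2, inv_mul_cancel₀ (by positivity : ((2:ℝ)^n) ≠ 0), one_mul]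
        ring

/-- η in terms of the third moment of `Nw`. -/
lemma etaEq (ψ : BV n → ℂ) :
    (2 ^ n : ℝ) * ∑ x : BV n × BV n, weylDist ψ x * charDist ψ x
      = ((2:ℝ) ^ n)⁻¹ * ∑ z : BV n × BV n, (Nw ψ z) ^ 3 := by
  have hw : ∀ x : BV n × BV n, weylDist ψ x
      = ((2:ℝ)^n)⁻¹ * (((2:ℝ)^n)⁻¹ * ∑ z : BV n × BV n, (Nw ψ z) ^ 2 * sgR z x) := by
    intro x
    unfold weylDist
    rw [← convR]
    rw [Finset.mul_sum, Finset.mul_sum]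
    refine Finset.sum_congr rfl fun y _ => ?_
    rw [charDist_eq, charDist_eq]
    ring
  calc (2 ^ n : ℝ) * ∑ x : BV n × BV n, weylDist ψ x * charDist ψ x
      = (2^n : ℝ) * ∑ x : BV n × BV n, (((2:ℝ)^n)⁻¹ * ((2:ℝ)^n)⁻¹ * ((2:ℝ)^n)⁻¹)
          * ((∑ z : BV n × BV n, (Nw ψ z) ^ 2 * sgR z x) * Nw ψ x) := by
        congr 1
        refine Finset.sum_congr rfl fun x _ => ?_
        rw [hw, charDist_eq]
        ring
    _ = (2^n : ℝ) * ((((2:ℝ)^n)⁻¹ * ((2:ℝ)^n)⁻¹ * ((2:ℝ)^n)⁻¹)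
          * ∑ z : BV n × BV n, (Nw ψ z) ^ 2 * ∑ x : BV n × BV n, Nw ψ x * sgR x z) := by
        rw [← Finset.mul_sum]
        congr 1
        congr 1
        calc ∑ i : BV n × BV n, (∑ z : BV n × BV n, Nw ψ z ^ 2 * sgR z i) * Nw ψ i
            = ∑ i : BV n × BV n, ∑ z : BV n × BV n, Nw ψ z ^ 2 * (Nw ψ i * sgR i z) := by
              refine Finset.sum_congr rfl fun i _ => ?_
              rw [Finset.sum_mul]
              refine Finset.sum_congr rfl fun z _ => ?_
              rw [sgR_symm z i]; ring
          _ = ∑ z : BV n × BV n, ∑ i : BV n × BV n, Nw ψ z ^ 2 * (Nw ψ i * sgR i z) :=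
              Finset.sum_comm
          _ = ∑ z : BV n × BV n, Nw ψ z ^ 2 * ∑ x : BV n × BV n, Nw ψ x * sgR x z := by
              refine Finset.sum_congr rfl fun z _ => ?_
              rw [← Finset.mul_sum]
    _ = ((2:ℝ) ^ n)⁻¹ * ∑ z : BV n × BV n, (Nw ψ z) ^ 3 := by
        have : ∀ z : BV n × BV n, (Nw ψ z) ^ 2 * ∑ x : BV n × BV n, Nw ψ x * sgR x z
            = (2:ℝ)^n * (Nw ψ z)^3 := by
          intro z
          rw [dualityR ψ z]
          ring
        rw [Finset.sum_congr rfl fun z _ => this z, ← Finset.mul_sum]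
        have h20 : ((2:ℝ)^n) ≠ 0 := by positivity
        field_simp

end B5


section Gates
variable {n : ℕ}

lemma pow_bdot_split (z : ℂ) (j : Fin n) (a b : BV n) :
    z ^ bdot a b
      = (if a j = 1 ∧ b j = 1 then z else 1)
        * z ^ bdot (Function.update a j 0) (Function.update b j 0) := by
  rw [pow_bdot_eq_prod, pow_bdot_eq_prod,
    Finset.prod_eq_mul_prod_sdiff_singleton_of_mem (Finset.mem_univ j),
    Finset.prod_eq_mul_prod_sdiff_singleton_of_mem (Finset.mem_univ j)
      (fun i => if Function.update a j 0 i = 1 ∧ Function.update b j 0 i = 1 then z else 1)]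
  have h1 : (if Function.update a j 0 j = 1 ∧ Function.update b j 0 j = 1 then z else 1) = 1 := by
    simp
  rw [h1, one_mul]
  congr 1
  refine Finset.prod_congr rfl fun i hi => ?_
  have hij : i ≠ j := by
    rcases Finset.mem_sdiff.mp hi with ⟨_, h2⟩
    simpa using h2
  rw [Function.update_of_ne hij, Function.update_of_ne hij]

lemma update_update (a : BV n) (j : Fin n) (v w : ZMod 2) :
    Function.update (Function.update a j v) j w = Function.update a j w := by
  simp [Function.update_idem]

lemma Sgate_unitary (j : Fin n) : (Sgate j)ᴴ * Sgate j = 1 := by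
  ext r c
  rw [Matrix.mul_apply, Finset.sum_eq_single r]
  · simp only [Matrix.conjTranspose_apply, Sgate, Matrix.of_apply, if_pos rfl]
    by_cases h : r = c
    · subst h
      simp only [if_pos rfl, if_true, Matrix.one_apply_eq]
      rw [star_pow, Complex.star_def, Complex.conj_I, ← mul_pow]
      norm_num
    · simp [h, Matrix.one_apply, Ne.symm h]
  · intro m _ hm
    simp [Matrix.conjTranspose_apply, Sgate, Ne.symm hm, hm]
  · intro h; exact absurd (Finset.mem_univ r) h

lemma z11 : (1 : ZMod 2) + 1 = 0 := rfl
lemma zv0 : (0 : ZMod 2).val = 0 := rfl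
lemma zv1 : (1 : ZMod 2).val = 1 := rfl

lemma Sgate_comm (j : Fin n) (x : BV n × BV n) :
    Weyl x * Sgate j
      = (if x.1 j = 1 ∧ x.2 j = 0 then (-1:ℂ) else 1)
        • (Sgate j * Weyl (x.1, Function.update x.2 j (x.2 j + x.1 j))) := by
  set q' : BV n := Function.update x.2 j (x.2 j + x.1 j) with hq'
  ext r c
  have hL : (Weyl x * Sgate j) r c
      = (if r = c + x.1 then Complex.I ^ bdot x.1 x.2 * (-1:ℂ) ^ bdot x.2 c else 0)
        * Complex.I ^ (c j).val := by
    rw [Matrix.mul_apply, Finset.sum_eq_single c]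
    · simp [Sgate, Weyl]
    · intro m _ hm
      simp [Sgate, hm]
    · intro h; exact absurd (Finset.mem_univ c) h
  have hR : (Sgate j * Weyl (x.1, q')) r c
      = Complex.I ^ (r j).val
        * (if r = c + x.1 then Complex.I ^ bdot x.1 q' * (-1:ℂ) ^ bdot q' c else 0) := by
    rw [Matrix.mul_apply, Finset.sum_eq_single r]
    · simp [Sgate, Weyl]
    · intro m _ hm
      simp [Sgate, Ne.symm hm]
    · intro h; exact absurd (Finset.mem_univ r) h
  rw [Matrix.smul_apply, hL, hR]
  by_cases hrc : r = c + x.1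
  · rw [if_pos hrc, if_pos hrc]
    have hrj : r j = c j + x.1 j := by rw [hrc]; rfl
    rw [hrj]
    rw [pow_bdot_split Complex.I j x.1 x.2, pow_bdot_split Complex.I j x.1 q',
      pow_bdot_split (-1:ℂ) j x.2 c, pow_bdot_split (-1:ℂ) j q' c,
      hq', update_update, Function.update_self]
    set A := Complex.I ^ bdot (Function.update x.1 j 0) (Function.update x.2 j 0) with hA
    set B := (-1:ℂ) ^ bdot (Function.update x.2 j 0) (Function.update c j 0) with hB
    rcases zmod2_cases (x.1 j) with h1 | h1 <;>
      rcases zmod2_cases (x.2 j) with h2 | h2 <;>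
      rcases zmod2_cases (c j) with h3 | h3 <;>
      simp [h1, h2, h3, z11, zv0, zv1, smul_eq_mul, Function.update_self] <;>
      ring_nf <;>
      simp [Complex.I_sq] <;>
      ring
  · rw [if_neg hrc, if_neg hrc]
    simp

lemma zadd_iff : ∀ u v w : ZMod 2, (v + w = u ↔ v = u + w) := by decide

lemma Hgate_comm (j : Fin n) (x : BV n × BV n) :
    Weyl x * Hgate j
      = (if x.1 j = 1 ∧ x.2 j = 1 then (-1:ℂ) else 1)
        • (Hgate j * Weyl (Function.update x.1 j (x.2 j), Function.update x.2 j (x.1 j))) := by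
  set p' : BV n := Function.update x.1 j (x.2 j) with hp'
  set q' : BV n := Function.update x.2 j (x.1 j) with hq'
  ext r c
  have hL : (Weyl x * Hgate j) r c
      = (Complex.I ^ bdot x.1 x.2 * (-1:ℂ) ^ bdot x.2 (r + x.1)) * Hgate j (r + x.1) c := by
    rw [Matrix.mul_apply, Finset.sum_eq_single (r + x.1)]
    · rw [show Weyl x r (r + x.1) = Complex.I ^ bdot x.1 x.2 * (-1:ℂ) ^ bdot x.2 (r + x.1) from ?_]
      show (if r = r + x.1 + x.1 then _ else 0) = _
      rw [if_pos (bv_add_cancel r x.1).symm]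
    · intro m _ hm
      show (if r = m + x.1 then _ else 0) * _ = 0
      rw [if_neg, zero_mul]
      intro h; exact hm (bv_eq_add_iff.mp h)
    · intro h; exact absurd (Finset.mem_univ _) h
  have hR : (Hgate j * Weyl (p', q')) r c
      = Hgate j r (c + p') * (Complex.I ^ bdot p' q' * (-1:ℂ) ^ bdot q' c) := by
    rw [Matrix.mul_apply, Finset.sum_eq_single (c + p')]
    · congr 1
      show (if c + p' = c + p' then _ else 0) = _
      rw [if_pos rfl]
    · intro m _ hm
      show _ * (if m = c + p' then _ else 0) = 0
      rw [if_neg hm, mul_zero]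
    · intro h; exact absurd (Finset.mem_univ _) h
  rw [Matrix.smul_apply, hL, hR]
  show _ * Matrix.of _ (r + x.1) c = _ • (Matrix.of _ r (c + p') * _)
  simp only [Matrix.of_apply]
  have hcond : (∀ i, i ≠ j → (r + x.1) i = c i) ↔ (∀ i, i ≠ j → r i = (c + p') i) := by
    constructor <;> intro h i hi <;> have h2 := h i hi
    · show r i = c i + p' i
      rw [hp', Function.update_of_ne hi]
      exact (zadd_iff (c i) (r i) (x.1 i)).mp h2
    · show r i + x.1 i = c i
      have h3 : r i = c i + x.1 i := by
        have h4 : (c + p') i = c i + x.1 i := by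
          show c i + p' i = _
          rw [hp', Function.update_of_ne hi]
        rw [h4] at h2; exact h2
      exact (zadd_iff (c i) (r i) (x.1 i)).mpr h3
  by_cases hP : ∀ i, i ≠ j → (r + x.1) i = c i
  · rw [if_pos hP, if_pos (hcond.mp hP)]
    have hupd : Function.update (r + x.1) j 0 = Function.update c j 0 := by
      funext i
      by_cases hi : i = j
      · subst hi; simp
      · rw [Function.update_of_ne hi, Function.update_of_ne hi]; exact hP i hi
    have hrx : (r + x.1) j = r j + x.1 j := rfl
    have hcp : (c + p') j = c j + x.2 j := by
      show c j + p' j = _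
      rw [hp', Function.update_self]
    rw [pow_bdot_split Complex.I j x.1 x.2, pow_bdot_split Complex.I j p' q',
      pow_bdot_split (-1:ℂ) j x.2 (r + x.1), pow_bdot_split (-1:ℂ) j q' c,
      hupd, hp', hq', update_update, update_update, Function.update_self,
      Function.update_self, hrx, hcp]
    set A := Complex.I ^ bdot (Function.update x.1 j 0) (Function.update x.2 j 0) with hA
    set B := (-1:ℂ) ^ bdot (Function.update x.2 j 0) (Function.update c j 0) with hB
    set α := (((Real.sqrt 2 : ℝ) : ℂ))⁻¹ with hα
    rcases zmod2_cases (x.1 j) with h1 | h1 <;>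
      rcases zmod2_cases (x.2 j) with h2 | h2 <;>
      rcases zmod2_cases (r j) with h3 | h3 <;>
      rcases zmod2_cases (c j) with h4 | h4 <;>
      simp [h1, h2, h3, h4, z11, zv0, zv1, smul_eq_mul] <;>
      ring_nf <;>
      simp [Complex.I_sq] <;>
      ring
  · rw [if_neg hP, if_neg (fun h => hP (hcond.mpr h))]
    simp

lemma Hgate_unitary (j : Fin n) : (Hgate j)ᴴ * Hgate j = 1 := by
  ext r c
  rw [Matrix.mul_apply]
  by_cases hB : ∀ i, i ≠ j → r i = c i
  · have hne : Function.update r j 0 ≠ Function.update r j 1 := by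
      intro h
      have := congrFun h j
      simp at this
    have hother : ∀ m ∈ Finset.univ, m ≠ Function.update r j (0:ZMod 2) ∧ m ≠ Function.update r j 1 →
        (Hgate j)ᴴ r m * Hgate j m c = 0 := by
      rintro m _ ⟨hm0, hm1⟩
      have hmr : ¬ (∀ i, i ≠ j → m i = r i) := by
        intro h
        have hm : m = Function.update r j (m j) := by
          funext i; by_cases hi : i = j
          · subst hi; rw [Function.update_self]
          · rw [Function.update_of_ne hi]; exact h i hi
        rcases zmod2_cases (m j) with h' | h'
        · rw [h'] at hm; exact hm0 hm
        · rw [h'] at hm; exact hm1 hm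
      rw [Matrix.conjTranspose_apply]
      simp [Hgate, hmr]
    rw [Finset.sum_eq_add (Function.update r j 0) (Function.update r j 1) hne hother
      (fun h => absurd (Finset.mem_univ _) h) (fun h => absurd (Finset.mem_univ _) h)]
    have hcond0 : ∀ v : ZMod 2, (∀ i, i ≠ j → Function.update r j v i = r i) := by
      intro v i hi; rw [Function.update_of_ne hi]
    have hcondc : ∀ v : ZMod 2, (∀ i, i ≠ j → Function.update r j v i = c i) := by
      intro v i hi; rw [Function.update_of_ne hi]; exact hB i hi
    simp only [Matrix.conjTranspose_apply, Hgate, Matrix.of_apply,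
      if_pos (hcond0 0), if_pos (hcond0 1), if_pos (hcondc 0), if_pos (hcondc 1),
      Function.update_self]
    have hstar : star ((((Real.sqrt 2 : ℝ) : ℂ))⁻¹) = (((Real.sqrt 2 : ℝ) : ℂ))⁻¹ := by
      rw [star_inv₀, Complex.star_def, Complex.conj_ofReal]
    have hαα : (((Real.sqrt 2 : ℝ) : ℂ))⁻¹ * (((Real.sqrt 2 : ℝ) : ℂ))⁻¹ = (2:ℂ)⁻¹ := by
      rw [← mul_inv, ← Complex.ofReal_mul, Real.mul_self_sqrt (by norm_num)]
      norm_num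
    have heq : (r j = c j) → r = c := by
      intro h; funext i; by_cases hi : i = j
      · subst hi; exact h
      · exact hB i hi
    rcases zmod2_cases (r j) with h3 | h3 <;> rcases zmod2_cases (c j) with h4 | h4
    · have hrc : r = c := heq (by rw [h3, h4])
      subst hrc
      rw [Matrix.one_apply_eq]
      simp only [h3, zv0, zv1, Nat.mul_zero, Nat.zero_mul, pow_zero, mul_one, StarMul.star_mul, hstar,
        star_one, one_mul]
      linear_combination 2 * hαα
    · have hrc : r ≠ c := fun h => by rw [h, h4] at h3; exact absurd h3 (by decide)
      rw [Matrix.one_apply_ne hrc]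
      simp only [h3, h4, zv0, zv1, Nat.mul_zero, Nat.zero_mul, Nat.mul_one, Nat.one_mul, pow_zero,
        pow_one, mul_one, StarMul.star_mul, hstar, star_one, one_mul, star_neg]
      ring
    · have hrc : r ≠ c := fun h => by rw [h, h4] at h3; exact absurd h3 (by decide)
      rw [Matrix.one_apply_ne hrc]
      simp only [h3, h4, zv0, zv1, Nat.mul_zero, Nat.zero_mul, Nat.mul_one, Nat.one_mul, pow_zero,
        pow_one, mul_one, StarMul.star_mul, hstar, star_one, one_mul, star_neg]
      ring
    · have hrc : r = c := heq (by rw [h3, h4])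
      subst hrc
      rw [Matrix.one_apply_eq]
      simp only [h3, zv0, zv1, Nat.mul_zero, Nat.zero_mul, Nat.mul_one, Nat.one_mul, pow_zero,
        pow_one, mul_one, StarMul.star_mul, hstar, star_one, one_mul, star_neg]
      linear_combination 2 * hαα
  · have hrc : r ≠ c := fun h => hB (fun i _ => by rw [h])
    rw [Matrix.one_apply_ne hrc]
    push_neg at hB
    obtain ⟨i, hi, hne⟩ := hB
    refine Finset.sum_eq_zero fun m _ => ?_
    by_cases h1 : ∀ i', i' ≠ j → m i' = r i'
    · have h2 : ¬ (∀ i', i' ≠ j → m i' = c i') := fun h2 => hne ((h1 i hi).symm.trans (h2 i hi))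
      simp [Hgate, h2]
    · simp [Matrix.conjTranspose_apply, Hgate, h1]

/-- The linear (involutive) map on bit strings implemented by CNOT. -/
def Lf (j k : Fin n) (c : BV n) : BV n := Function.update c k (c k + c j)

lemma CNOT_apply (j k : Fin n) (r c : BV n) :
    CNOTgate j k r c = if r = Lf j k c then 1 else 0 := rfl

lemma Lf_add {j k : Fin n} (a b : BV n) : Lf j k (a + b) = Lf j k a + Lf j k b := by
  funext i
  simp only [Lf, Pi.add_apply]
  by_cases hik : i = k
  · rw [hik]
    rw [Function.update_self, Function.update_self, Function.update_self]
    show (a + b) k + (a + b) j = _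
    rw [Pi.add_apply, Pi.add_apply]
    ring
  · rw [Function.update_of_ne hik, Function.update_of_ne hik, Function.update_of_ne hik]
    rfl

lemma Lf_invol {j k : Fin n} (hjk : j ≠ k) (a : BV n) : Lf j k (Lf j k a) = a := by
  funext i
  show Function.update (Lf j k a) k (Lf j k a k + Lf j k a j) i = a i
  by_cases hik : i = k
  · rw [hik]
    rw [Function.update_self]
    have h1 : Lf j k a k = a k + a j := Function.update_self _ _ _
    have h2 : Lf j k a j = a j := Function.update_of_ne hjk _ _
    rw [h1, h2]
    have : ∀ v w : ZMod 2, v + w + w = v := by decide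
    exact this _ _
  · rw [Function.update_of_ne hik]
    show Function.update a k _ i = a i
    rw [Function.update_of_ne hik]

lemma CNOT_unitary {j k : Fin n} (hjk : j ≠ k) : (CNOTgate j k)ᴴ * CNOTgate j k = 1 := by
  ext r c
  rw [Matrix.mul_apply, Finset.sum_eq_single (Lf j k r)]
  · rw [Matrix.conjTranspose_apply, CNOT_apply, CNOT_apply, if_pos rfl]
    by_cases h : r = c
    · subst h
      rw [if_pos rfl, Matrix.one_apply_eq]
      simp
    · have hne : Lf j k r ≠ Lf j k c := fun he => h (by
        rw [← Lf_invol hjk r, he, Lf_invol hjk])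
      rw [if_neg hne, Matrix.one_apply_ne h]
      simp
  · intro m _ hm
    rw [Matrix.conjTranspose_apply, CNOT_apply, if_neg hm]
    simp
  · intro h; exact absurd (Finset.mem_univ _) h

lemma negI_pow_mul (m : ℕ) : (-Complex.I) ^ m * Complex.I ^ m = 1 := by
  rw [← mul_pow]
  norm_num [Complex.I_mul_I]

lemma CNOT_comm {j k : Fin n} (hjk : j ≠ k) (x : BV n × BV n) :
    Weyl x * CNOTgate j k
      = (Complex.I ^ bdot x.1 x.2
          * (-Complex.I) ^ bdot (Lf j k x.1) (Function.update x.2 j (x.2 j + x.2 k)))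
        • (CNOTgate j k * Weyl (Lf j k x.1, Function.update x.2 j (x.2 j + x.2 k))) := by
  set p' : BV n := Lf j k x.1 with hp'
  set q' : BV n := Function.update x.2 j (x.2 j + x.2 k) with hq'
  ext r c
  have hL : (Weyl x * CNOTgate j k) r c
      = if r = Lf j k c + x.1 then Complex.I ^ bdot x.1 x.2 * (-1:ℂ) ^ bdot x.2 (Lf j k c) else 0 := by
    rw [Matrix.mul_apply, Finset.sum_eq_single (Lf j k c)]
    · rw [CNOT_apply, if_pos rfl, mul_one]
      rfl
    · intro m _ hm
      rw [CNOT_apply, if_neg (fun h : m = Lf j k c => hm h), mul_zero]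
    · intro h; exact absurd (Finset.mem_univ _) h
  have hR : (CNOTgate j k * Weyl (p', q')) r c
      = if r = Lf j k (c + p') then Complex.I ^ bdot p' q' * (-1:ℂ) ^ bdot q' c else 0 := by
    rw [Matrix.mul_apply, Finset.sum_eq_single (c + p')]
    · have hW : Weyl (p', q') (c + p') c = Complex.I ^ bdot p' q' * (-1:ℂ) ^ bdot q' c := by
        show (if c + p' = c + p' then _ else 0) = _
        rw [if_pos rfl]
      rw [CNOT_apply, hW]
      split_ifs <;> simp
    · intro m _ hm
      show _ * (if m = c + p' then _ else 0) = 0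
      rw [if_neg hm, mul_zero]
    · intro h; exact absurd (Finset.mem_univ _) h
  rw [Matrix.smul_apply, hL, hR]
  have hLc : Lf j k (c + p') = Lf j k c + x.1 := by
    rw [Lf_add, hp', Lf_invol hjk]
  rw [hLc]
  by_cases hrc : r = Lf j k c + x.1
  · rw [if_pos hrc, if_pos hrc, smul_eq_mul]
    have hsgn : (-1:ℂ) ^ bdot x.2 (Lf j k c) = (-1:ℂ) ^ bdot q' c := by
      have hkj : k ≠ j := Ne.symm hjk
      rw [pow_bdot_split (-1:ℂ) j x.2 (Lf j k c), pow_bdot_split (-1:ℂ) j q' c,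
        hq', update_update,
        pow_bdot_split (-1:ℂ) k (Function.update x.2 j 0) (Function.update (Lf j k c) j 0),
        pow_bdot_split (-1:ℂ) k (Function.update x.2 j 0) (Function.update c j 0)]
      have hbase : Function.update (Function.update (Lf j k c) j 0) k 0
          = Function.update (Function.update c j 0) k 0 := by
        funext i
        by_cases hik : i = k
        · subst hik; rw [Function.update_self, Function.update_self]
        · rw [Function.update_of_ne hik, Function.update_of_ne hik]
          by_cases hij : i = j
          · subst hij; rw [Function.update_self, Function.update_self]
          · rw [Function.update_of_ne hij, Function.update_of_ne hij]
            show Function.update c k _ i = c i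
            rw [Function.update_of_ne hik]
      rw [hbase]
      have e1 : Lf j k c j = c j := Function.update_of_ne hjk _ _
      have e2 : Function.update x.2 j (0:ZMod 2) k = x.2 k := Function.update_of_ne hkj _ _
      have e3 : Function.update (Lf j k c) j (0:ZMod 2) k = c k + c j := by
        rw [Function.update_of_ne hkj]
        exact Function.update_self _ _ _
      have e4 : Function.update c j (0:ZMod 2) k = c k := Function.update_of_ne hkj _ _
      have e5 : Function.update x.2 j (x.2 j + x.2 k) j = x.2 j + x.2 k :=
        Function.update_self _ _ _
      rw [e1, e2, e3, e4, e5]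
      rcases zmod2_cases (x.2 j) with h1 | h1 <;>
        rcases zmod2_cases (x.2 k) with h2 | h2 <;>
        rcases zmod2_cases (c j) with h3 | h3 <;>
        rcases zmod2_cases (c k) with h4 | h4 <;>
        simp [h1, h2, h3, h4, z11] <;> ring
    rw [hsgn]
    have hc := negI_pow_mul (bdot p' q')
    calc Complex.I ^ bdot x.1 x.2 * (-1:ℂ) ^ bdot q' c
        = Complex.I ^ bdot x.1 x.2 * ((-Complex.I) ^ bdot p' q' * Complex.I ^ bdot p' q')
          * (-1:ℂ) ^ bdot q' c := by rw [hc, mul_one]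
      _ = Complex.I ^ bdot x.1 x.2 * (-Complex.I) ^ bdot p' q'
          * (Complex.I ^ bdot p' q' * (-1:ℂ) ^ bdot q' c) := by ring
  · rw [if_neg hrc, if_neg hrc, smul_zero]

end Gates

-- to be inserted before "end EtaAux"
section Clifford
variable {n : ℕ}

/-- A matrix is *good* if it is an isometry and conjugates Weyl operators to
unimodular multiples of Weyl operators. -/
def GoodMat (C : Matrix (BV n) (BV n) ℂ) : Prop :=
  Cᴴ * C = 1 ∧ ∀ x : BV n × BV n, ∃ (y : BV n × BV n) (μ : ℂ),
    ‖μ‖ = 1 ∧ Weyl x * C = μ • (C * Weyl y)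

lemma good_one : GoodMat (1 : Matrix (BV n) (BV n) ℂ) :=
  ⟨by simp, fun x => ⟨x, 1, by simp, by simp⟩⟩

lemma good_mul {C D : Matrix (BV n) (BV n) ℂ} (hC : GoodMat C) (hD : GoodMat D) :
    GoodMat (C * D) := by
  obtain ⟨hC1, hC2⟩ := hC
  obtain ⟨hD1, hD2⟩ := hD
  constructor
  · rw [Matrix.conjTranspose_mul, mul_assoc, ← mul_assoc Cᴴ C D, hC1, one_mul, hD1]
  · intro x
    obtain ⟨y, μ, hμ, hcom⟩ := hC2 x
    obtain ⟨z, ν, hν, hcom2⟩ := hD2 y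
    refine ⟨z, μ * ν, by rw [norm_mul, hμ, hν, one_mul], ?_⟩
    calc Weyl x * (C * D) = (Weyl x * C) * D := (mul_assoc _ _ _).symm
      _ = (μ • (C * Weyl y)) * D := by rw [hcom]
      _ = μ • (C * (Weyl y * D)) := by rw [Matrix.smul_mul, mul_assoc]
      _ = μ • (C * (ν • (D * Weyl z))) := by rw [hcom2]
      _ = (μ * ν) • (C * D * Weyl z) := by
          rw [Matrix.mul_smul, smul_smul, mul_assoc]

lemma good_gen {M : Matrix (BV n) (BV n) ℂ} (hM : M ∈ cliffordGens n) : GoodMat M := by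
  rcases hM with ⟨j, rfl⟩ | ⟨j, rfl⟩ | ⟨j, k, hjk, rfl⟩
  · exact ⟨Hgate_unitary j, fun x =>
      ⟨(Function.update x.1 j (x.2 j), Function.update x.2 j (x.1 j)),
        (if x.1 j = 1 ∧ x.2 j = 1 then (-1:ℂ) else 1),
        by split_ifs <;> simp, Hgate_comm j x⟩⟩
  · exact ⟨Sgate_unitary j, fun x =>
      ⟨(x.1, Function.update x.2 j (x.2 j + x.1 j)),
        (if x.1 j = 1 ∧ x.2 j = 0 then (-1:ℂ) else 1),
        by split_ifs <;> simp, Sgate_comm j x⟩⟩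
  · refine ⟨CNOT_unitary hjk, fun x =>
      ⟨(Lf j k x.1, Function.update x.2 j (x.2 j + x.2 k)),
        Complex.I ^ bdot x.1 x.2
          * (-Complex.I) ^ bdot (Lf j k x.1) (Function.update x.2 j (x.2 j + x.2 k)),
        ?_, CNOT_comm hjk x⟩⟩
    rw [norm_mul, norm_pow, norm_pow, Complex.norm_I]
    simp

lemma good_clifford {C : Matrix (BV n) (BV n) ℂ} (hC : C ∈ CliffordGroup n) : GoodMat C :=
  Submonoid.closure_induction (fun M hM => good_gen hM) good_one
    (fun _ _ _ _ ha hb => good_mul ha hb) hC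

lemma weylExp_mulVec {C : Matrix (BV n) (BV n) ℂ} (hC : GoodMat C) (v : BV n → ℂ)
    (x : BV n × BV n) :
    ∃ (y : BV n × BV n) (μ : ℂ), ‖μ‖ = 1 ∧
      weylExp (C.mulVec v) x = μ * weylExp v y := by
  obtain ⟨hU, h2⟩ := hC
  obtain ⟨y, μ, hμ, hcom⟩ := h2 x
  refine ⟨y, μ, hμ, ?_⟩
  have h3 : weylExp (C.mulVec v) x
      = dotProduct (star (C.mulVec v)) ((Weyl x * C).mulVec v) := by
    rw [← Matrix.mulVec_mulVec]
    rfl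
  rw [h3, hcom, Matrix.smul_mulVec, dotProduct_smul, smul_eq_mul]
  congr 1
  rw [← Matrix.mulVec_mulVec, Matrix.star_mulVec, ← dotProduct_mulVec,
    Matrix.mulVec_mulVec, hU, Matrix.one_mulVec]
  rfl

lemma dot_self_mulVec {C : Matrix (BV n) (BV n) ℂ} (hU : Cᴴ * C = 1) (v : BV n → ℂ) :
    dotProduct (star (C.mulVec v)) (C.mulVec v)
      = dotProduct (star v) v := by
  rw [Matrix.star_mulVec, ← dotProduct_mulVec, Matrix.mulVec_mulVec, hU,
    Matrix.one_mulVec]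

lemma stab_isState {φ : BV n → ℂ} (hφ : φ ∈ stabStates n) : IsState φ := by
  obtain ⟨C, hC, rfl⟩ := hφ
  have hU := (good_clifford hC).1
  have h1 := dot_self_mulVec hU (e0 (n := n))
  have h2 : dotProduct (star (e0 (n := n))) (e0 (n := n)) = 1 := by
    unfold dotProduct e0
    rw [Finset.sum_eq_single (0 : BV n)] <;> simp
  rw [h2] at h1
  unfold IsState
  have h3 : ∀ b : BV n, (‖C.mulVec e0 b‖ ^ 2 : ℝ)
      = Complex.normSq (C.mulVec e0 b) := fun b => Complex.sq_norm _
  rw [Finset.sum_congr rfl fun b _ => h3 b]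
  have h4 : dotProduct (star (C.mulVec e0)) (C.mulVec e0)
      = ((∑ b : BV n, Complex.normSq (C.mulVec e0 b) : ℝ) : ℂ) := by
    unfold dotProduct
    rw [Complex.ofReal_sum]
    refine Finset.sum_congr rfl fun b _ => ?_
    rw [Pi.star_apply, ← conj_mul_self]
    rfl
  rw [h4] at h1
  exact_mod_cast h1

lemma weylExp_e0_abs (y : BV n × BV n) :
    ‖weylExp (e0 : BV n → ℂ) y‖ = if y.1 = 0 then 1 else 0 := by
  have h1 : weylExp (e0 : BV n → ℂ) y
      = (starRingEnd ℂ) (e0 (0 : BV n)) * ((Weyl y).mulVec e0 0) := by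
    unfold weylExp
    rw [Finset.sum_eq_single (0 : BV n)]
    · intro m _ hm
      unfold e0
      rw [if_neg hm, map_zero, zero_mul]
    · intro h; exact absurd (Finset.mem_univ _) h
  rw [h1, weyl_mulVec, zero_add]
  unfold e0
  rw [if_pos rfl, _root_.map_one, one_mul]
  by_cases h : y.1 = 0
  · rw [if_pos h, if_pos h]
    have hb1 : bdot y.1 y.2 = 0 := by rw [h, bdot_comm, bdot_zero_right]
    have hb2 : bdot y.2 y.1 = 0 := by rw [h, bdot_zero_right]
    rw [hb1, hb2]
    simp
  · rw [if_neg h, if_neg h]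
    simp

lemma stab_weylExp_abs {φ : BV n → ℂ} (hφ : φ ∈ stabStates n) (x : BV n × BV n) :
    ‖weylExp φ x‖ = 0 ∨ ‖weylExp φ x‖ = 1 := by
  obtain ⟨C, hC, rfl⟩ := hφ
  obtain ⟨y, μ, hμ, heq⟩ := weylExp_mulVec (good_clifford hC) e0 x
  rw [heq, norm_mul, hμ, one_mul, weylExp_e0_abs]
  split_ifs <;> simp

end Clifford

section Final
variable {n : ℕ}

lemma eta_ge_per_stab (ψ : BV n → ℂ) (hψ : IsState ψ) (φ : BV n → ℂ)
    (hφ : φ ∈ stabStates n) :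
    Complex.normSq (innerC φ ψ) ^ 6 ≤ ((2:ℝ) ^ n)⁻¹ * ∑ z : BV n × BV n, (Nw ψ z) ^ 3 := by
  classical
  set S : Finset (BV n × BV n) := Finset.univ.filter (fun x => weylExp φ x ≠ 0) with hS
  have h2n : (0:ℝ) < (2:ℝ)^n := by positivity
  -- each Nw φ on S equals 1
  have hNS : ∀ x ∈ S, Nw φ x = 1 := by
    intro x hx
    have hne : weylExp φ x ≠ 0 := (Finset.mem_filter.mp hx).2
    rcases stab_weylExp_abs hφ x with h | h
    · exact absurd (norm_eq_zero.mp h) hne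
    · unfold Nw
      rw [← Complex.sq_norm, h, one_pow]
  have hsum_filter : ∑ x ∈ S, Nw φ x = ∑ x : BV n × BV n, Nw φ x := by
    refine Finset.sum_filter_of_ne fun x _ h => ?_
    intro h0
    apply h
    unfold Nw
    rw [h0, map_zero]
  have hcard : (S.card : ℝ) = (2:ℝ)^n := by
    have h1 : ∑ x ∈ S, Nw φ x = (2:ℝ)^n := by
      rw [hsum_filter, stateSumR φ (stab_isState hφ)]
    rw [Finset.sum_congr rfl hNS, Finset.sum_const, nsmul_eq_mul, mul_one] at h1
    exact h1
  -- Cauchy–Schwarz bound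
  set F := Complex.normSq (innerC φ ψ) with hF
  have hF0 : 0 ≤ F := Complex.normSq_nonneg _
  have habs : (2:ℝ)^n * F
      ≤ ∑ x ∈ S, ‖weylExp φ x‖ * ‖weylExp ψ x‖ := by
    rw [← crossR φ ψ]
    calc ‖∑ x : BV n × BV n, (starRingEnd ℂ) (weylExp φ x) * weylExp ψ x‖
        ≤ ∑ x : BV n × BV n, ‖(starRingEnd ℂ) (weylExp φ x) * weylExp ψ x‖ :=
          norm_sum_le _ _
      _ = ∑ x : BV n × BV n, ‖weylExp φ x‖ * ‖weylExp ψ x‖ := by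
          refine Finset.sum_congr rfl fun x _ => ?_
          rw [norm_mul, Complex.norm_conj]
      _ = ∑ x ∈ S, ‖weylExp φ x‖ * ‖weylExp ψ x‖ := by
          symm
          refine Finset.sum_filter_of_ne fun x _ h => ?_
          intro h0
          rw [h0, norm_zero, zero_mul] at h
          exact h rfl
  have hCS : (∑ x ∈ S, ‖weylExp φ x‖ * ‖weylExp ψ x‖) ^ 2
      ≤ (2:ℝ)^n * ∑ x ∈ S, Nw ψ x := by
    have h := Finset.sum_mul_sq_le_sq_mul_sq S
      (fun x => ‖weylExp φ x‖) (fun x => ‖weylExp ψ x‖)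
    have ha : ∑ x ∈ S, ‖weylExp φ x‖ ^ 2 = (2:ℝ)^n := by
      have : ∀ x ∈ S, ‖weylExp φ x‖ ^ 2 = Nw φ x := by
        intro x _; unfold Nw; rw [Complex.sq_norm]
      rw [Finset.sum_congr rfl this, hsum_filter, stateSumR φ (stab_isState hφ)]
    have hb : ∑ x ∈ S, ‖weylExp ψ x‖ ^ 2 = ∑ x ∈ S, Nw ψ x := by
      refine Finset.sum_congr rfl fun x _ => ?_
      unfold Nw; rw [Complex.sq_norm]
    rw [ha, hb] at h
    exact h
  have hSN : (2:ℝ)^n * F ^ 2 ≤ ∑ x ∈ S, Nw ψ x := by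
    have h1 : ((2:ℝ)^n * F) ^ 2
        ≤ (∑ x ∈ S, ‖weylExp φ x‖ * ‖weylExp ψ x‖) ^ 2 :=
      pow_le_pow_left₀ (mul_nonneg h2n.le hF0) habs 2
    have h2 : ((2:ℝ)^n * F) ^ 2 ≤ (2:ℝ)^n * ∑ x ∈ S, Nw ψ x := le_trans h1 hCS
    nlinarith [h2, h2n]
  have hJ : (∑ x ∈ S, Nw ψ x) ^ 3 / (S.card : ℝ) ^ 2 ≤ ∑ x ∈ S, (Nw ψ x) ^ 3 := by
    have := pow_sum_div_card_le_sum_pow (s := S) (f := Nw ψ)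
      (fun i _ => Nw_nonneg ψ i) 2
    exact this
  have hsub : ∑ x ∈ S, (Nw ψ x) ^ 3 ≤ ∑ z : BV n × BV n, (Nw ψ z) ^ 3 :=
    Finset.sum_le_sum_of_subset_of_nonneg (Finset.subset_univ S)
      (fun x _ _ => pow_nonneg (Nw_nonneg ψ x) 3)
  have hfinal : (2:ℝ)^n * F ^ 6 ≤ ∑ z : BV n × BV n, (Nw ψ z) ^ 3 := by
    have h3 : ((2:ℝ)^n * F ^ 2) ^ 3 ≤ (∑ x ∈ S, Nw ψ x) ^ 3 :=
      pow_le_pow_left₀ (by positivity) hSN 3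
    have hc2 : (0:ℝ) < (S.card : ℝ) ^ 2 := by rw [hcard]; positivity
    have h4 : ((2:ℝ)^n * F ^ 2) ^ 3 / (S.card : ℝ) ^ 2 ≤ ∑ x ∈ S, (Nw ψ x) ^ 3 :=
      le_trans ((div_le_div_iff_of_pos_right hc2).mpr h3) hJ
    have h5 : ((2:ℝ)^n * F ^ 2) ^ 3 / (S.card : ℝ) ^ 2 = (2:ℝ)^n * F ^ 6 := by
      rw [hcard]
      field_simp
    calc (2:ℝ)^n * F ^ 6 = ((2:ℝ)^n * F ^ 2) ^ 3 / (S.card : ℝ) ^ 2 := h5.symm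
      _ ≤ ∑ x ∈ S, (Nw ψ x) ^ 3 := h4
      _ ≤ ∑ z : BV n × BV n, (Nw ψ z) ^ 3 := hsub
  calc F ^ 6 = ((2:ℝ)^n)⁻¹ * ((2:ℝ)^n * F ^ 6) := by field_simp
    _ ≤ ((2:ℝ) ^ n)⁻¹ * ∑ z : BV n × BV n, (Nw ψ z) ^ 3 := by
        exact mul_le_mul_of_nonneg_left hfinal (by positivity)

end Final

end EtaAux

/-- if F_𝒮(ψ) ≥ 1/k then η(ψ) = 2ⁿ Σ_x q_ψ(x) p_ψ(x) ≥ 1/k⁶. -/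
theorem eta_lower_bound_of_fidelity {n : ℕ} (hn : 1 ≤ n) (ψ : BV n → ℂ)
    (hψ : IsState ψ) (k : ℝ) (hk : 1 ≤ k) (hfid : 1 / k ≤ stabFidelity ψ) :
    1 / k ^ 6 ≤ (2 ^ n : ℝ) * ∑ x : BV n × BV n, weylDist ψ x * charDist ψ x := by
  classical
  have hk0 : (0:ℝ) < k := lt_of_lt_of_le one_pos hk
  have hkinv : (0:ℝ) < 1 / k := by positivity
  set η := (2 ^ n : ℝ) * ∑ x : BV n × BV n, weylDist ψ x * charDist ψ x with hη
  have hηeq : η = ((2:ℝ) ^ n)⁻¹ * ∑ z : BV n × BV n, (Nw ψ z) ^ 3 := etaEq ψ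
  have hη0 : 0 ≤ η := by
    rw [hηeq]
    exact mul_nonneg (by positivity)
      (Finset.sum_nonneg fun z _ => pow_nonneg (Nw_nonneg ψ z) 3)
  set T : Set ℝ := {r | ∃ φ ∈ stabStates n, r = ‖innerC φ ψ‖ ^ 2} with hT
  have hsf : stabFidelity ψ = sSup T := rfl
  have hTne : T.Nonempty := by
    by_contra h
    rw [Set.not_nonempty_iff_eq_empty] at h
    have h0 : stabFidelity ψ = 0 := by rw [hsf, h, Real.sSup_empty]
    rw [h0] at hfid
    linarith
  have hkey : ∀ r ∈ T, r ^ 6 ≤ η := by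
    rintro r ⟨φ, hφ, rfl⟩
    have h1 := eta_ge_per_stab ψ hψ φ hφ
    rw [hηeq]
    calc (‖innerC φ ψ‖ ^ 2) ^ 6 = Complex.normSq (innerC φ ψ) ^ 6 := by
          rw [Complex.sq_norm]
      _ ≤ _ := h1
  by_contra hcon
  push_neg at hcon
  set c := η ^ ((6:ℝ)⁻¹) with hc
  have hc0 : 0 ≤ c := Real.rpow_nonneg hη0 _
  have hc6 : c ^ (6:ℕ) = η := by
    rw [hc, ← Real.rpow_natCast (η ^ ((6:ℝ)⁻¹)) 6, ← Real.rpow_mul hη0]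
    norm_num
  have hclt : c < 1 / k := by
    have h6 : c ^ (6:ℕ) < (1/k) ^ (6:ℕ) := by
      rw [hc6, div_pow, one_pow]
      exact hcon
    exact lt_of_pow_lt_pow_left₀ 6 (le_of_lt hkinv) h6
  obtain ⟨c', hcc', hc'k⟩ := exists_between hclt
  have hsup : c' < sSup T := lt_of_lt_of_le hc'k (hsf ▸ hfid)
  obtain ⟨r, hrT, hcr⟩ := exists_lt_of_lt_csSup hTne hsup
  have h1 : r ^ 6 ≤ η := hkey r hrT
  have hc'0 : 0 ≤ c' := le_trans hc0 (le_of_lt hcc')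
  have h2 : c' ^ 6 ≤ r ^ 6 := pow_le_pow_left₀ hc'0 (le_of_lt hcr) 6
  have h3 : c ^ 6 < c' ^ 6 := pow_lt_pow_left₀ hcc' hc0 (by norm_num)
  rw [hc6] at h3
  linarith
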